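/- Define 𝓕 : (1, ∞) → (0, ∞) by 𝓕(t) = 1/(t log t). Then 𝓕 is a strictly decreasing C^∞ bijection onto (0, ∞) with inverse 𝓕⁻¹ : (0, ∞) → (1, ∞), and the function b₂ : ℝ → ℝ defined by b₂(0) = 0 and b₂(y) = sgn(y)·𝓕′(𝓕⁻¹(|y|)) for y ≠ 0 is continuously differentiable on all of ℝ, with b₂′(0) = 0. -/

import Mathlib

open Set Real
open Filter Topology

noncomputable def Fd (t : ℝ) : ℝ := -(Real.log t + 1) / (t * Real.log t) ^ 2
noncomputable def Fdd (t : ℝ) : ℝ :=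
  2 * (Real.log t + 1) ^ 2 / (t * Real.log t) ^ 3 - t⁻¹ / (t * Real.log t) ^ 2

lemma glt_pos {t : ℝ} (ht : 1 < t) : 0 < t * Real.log t :=
  mul_pos (lt_trans one_pos ht) (Real.log_pos ht)

lemma hasDerivAt_g {t : ℝ} (ht : 0 < t) :
    HasDerivAt (fun t : ℝ => t * Real.log t) (Real.log t + 1) t := by
  have h := (hasDerivAt_id t).fun_mul (Real.hasDerivAt_log ht.ne')
  refine h.congr_deriv ?_
  field_simp
  simp only [id]; ring

lemma hasDerivAt_Ffun {t : ℝ} (ht : 1 < t) :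
    HasDerivAt (fun t : ℝ => 1 / (t * Real.log t)) (Fd t) t := by
  have h := (hasDerivAt_g (lt_trans one_pos ht)).fun_inv (glt_pos ht).ne'
  simpa [Fd, one_div, neg_div] using h

lemma Fd_neg {t : ℝ} (ht : 1 < t) : Fd t < 0 :=
  div_neg_of_neg_of_pos
    (neg_neg_iff_pos.mpr (by have := Real.log_pos ht; linarith)) (pow_pos (glt_pos ht) 2)

lemma hasDerivAt_Fd {t : ℝ} (ht : 1 < t) : HasDerivAt Fd (Fdd t) t := by
  have ht0 : (0:ℝ) < t := lt_trans one_pos ht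
  have hnum : HasDerivAt (fun t : ℝ => -(Real.log t + 1)) (-t⁻¹) t :=
    ((Real.hasDerivAt_log ht0.ne').add_const 1).neg
  have hden : HasDerivAt (fun t : ℝ => (t * Real.log t) ^ 2)
      (2 * (t * Real.log t) ^ 1 * (Real.log t + 1)) t := by
    simpa using (hasDerivAt_g ht0).fun_pow 2
  have h := hnum.fun_div hden (pow_ne_zero 2 (glt_pos ht).ne')
  refine h.congr_deriv ?_
  have h1 : t * Real.log t ≠ 0 := (glt_pos ht).ne'
  have h2 : t ≠ 0 := ht0.ne'
  unfold Fdd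
  field_simp
  ring

lemma continuousAt_Fdd {t : ℝ} (ht : 1 < t) : ContinuousAt Fdd t := by
  have ht0 : (0:ℝ) < t := lt_trans one_pos ht
  have hlog : ContinuousAt Real.log t := Real.continuousAt_log ht0.ne'
  have hg : ContinuousAt (fun t : ℝ => t * Real.log t) t := continuousAt_id.mul hlog
  unfold Fdd
  apply ContinuousAt.sub
  · exact (((hlog.add continuousAt_const).pow 2).const_mul 2).div (hg.pow 3)
      (pow_ne_zero 3 (glt_pos ht).ne')
  · exact (continuousAt_id.inv₀ ht0.ne').div (hg.pow 2) (pow_ne_zero 2 (glt_pos ht).ne')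

lemma tendsto_gl : Tendsto (fun t : ℝ => t * Real.log t) atTop atTop :=
  tendsto_id.atTop_mul_atTop₀ Real.tendsto_log_atTop

lemma tendsto_aux1 : Tendsto (fun t : ℝ => -(Real.log t + 1) / (t * Real.log t)) atTop (𝓝 0) := by
  have h1 : Tendsto (fun t : ℝ => (t * Real.log t)⁻¹) atTop (𝓝 0) :=
    tendsto_inv_atTop_zero.comp tendsto_gl
  have h2 : Tendsto (fun t : ℝ => t⁻¹) atTop (𝓝 0) := tendsto_inv_atTop_zero
  have h : Tendsto (fun t : ℝ => -(t⁻¹ + (t * Real.log t)⁻¹)) atTop (𝓝 0) := by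
    simpa using (h2.add h1).neg
  apply Tendsto.congr' _ h
  filter_upwards [eventually_ge_atTop 2] with t ht
  have h1t : (1:ℝ) < t := by linarith
  have hL : 0 < Real.log t := Real.log_pos h1t
  have ht0 : t ≠ 0 := by linarith
  field_simp

lemma tendsto_aux2 : Tendsto (fun t : ℝ => Fdd t / Fd t) atTop (𝓝 0) := by
  have hgl1 : Tendsto (fun t : ℝ => t * (Real.log t + 1)) atTop atTop :=
    tendsto_id.atTop_mul_atTop₀ (tendsto_atTop_add_const_right _ 1 Real.tendsto_log_atTop)
  have h1 : Tendsto (fun t : ℝ => (t * (Real.log t + 1))⁻¹) atTop (𝓝 0) :=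
    tendsto_inv_atTop_zero.comp hgl1
  have h2 : Tendsto (fun t : ℝ => t⁻¹) atTop (𝓝 0) := tendsto_inv_atTop_zero
  have h3 : Tendsto (fun t : ℝ => (t * Real.log t)⁻¹) atTop (𝓝 0) :=
    tendsto_inv_atTop_zero.comp tendsto_gl
  have h : Tendsto
      (fun t : ℝ => (t * (Real.log t + 1))⁻¹ - (2 * t⁻¹ + 2 * (t * Real.log t)⁻¹))
      atTop (𝓝 0) := by
    simpa using h1.sub ((h2.const_mul 2).add (h3.const_mul 2))
  apply Tendsto.congr' _ h
  filter_upwards [eventually_ge_atTop 2] with t ht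
  have h1t : (1:ℝ) < t := by linarith
  have hL : 0 < Real.log t := Real.log_pos h1t
  have hL1 : Real.log t + 1 ≠ 0 := by linarith
  have ht0 : t ≠ 0 := by linarith
  have hFd : Fd t ≠ 0 := (Fd_neg h1t).ne
  rw [eq_div_iff hFd]
  unfold Fd Fdd
  field_simp
  ring


/-- Define `𝓕 : (1, ∞) → (0, ∞)` by `𝓕 t = 1 / (t log t)`. Then `𝓕` is
a strictly decreasing `C^∞` bijection of `(1, ∞)` onto `(0, ∞)`, and for any inverse
function `𝓕⁻¹ : (0, ∞) → (1, ∞)`, the function `b₂ : ℝ → ℝ` with `b₂ 0 = 0` and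
`b₂ y = sgn(y) · 𝓕′(𝓕⁻¹ |y|)` for `y ≠ 0` is continuously differentiable on all of `ℝ`,
with `b₂′(0) = 0`. -/
theorem stmt_18 (F : ℝ → ℝ) (hF : ∀ t : ℝ, F t = 1 / (t * Real.log t)) :
    StrictAntiOn F (Set.Ioi 1) ∧
    ContDiffOn ℝ (⊤ : ℕ∞) F (Set.Ioi 1) ∧
    Set.BijOn F (Set.Ioi 1) (Set.Ioi 0) ∧
    ∀ Finv : ℝ → ℝ, Set.MapsTo Finv (Set.Ioi 0) (Set.Ioi 1) →
      Set.InvOn Finv F (Set.Ioi 1) (Set.Ioi 0) →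
      ∀ b₂ : ℝ → ℝ, b₂ 0 = 0 →
        (∀ y : ℝ, y ≠ 0 → b₂ y = Real.sign y * deriv F (Finv |y|)) →
        ContDiff ℝ 1 b₂ ∧ deriv b₂ 0 = 0 := by
  have hFeq : F = fun t : ℝ => 1 / (t * Real.log t) := funext hF
  have hanti : StrictAntiOn F (Set.Ioi 1) := by
    intro a ha b hb hab
    rw [hF, hF]
    apply one_div_lt_one_div_of_lt (glt_pos ha)
    exact mul_lt_mul'' hab (Real.log_lt_log (lt_trans one_pos ha) hab)
      (by have : (1:ℝ) < a := ha; linarith) (Real.log_nonneg (le_of_lt ha))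
  have hcd : ContDiffOn ℝ (⊤ : ℕ∞) F (Set.Ioi 1) := by
    rw [hFeq]
    refine ContDiffOn.div contDiffOn_const (contDiffOn_id.mul (Real.contDiffOn_log.mono ?_)) ?_
    · intro t ht
      simp only [mem_compl_iff, mem_singleton_iff]
      exact ne_of_gt (lt_trans one_pos ht)
    · intro t ht; exact (glt_pos ht).ne'
  have hmapsF : Set.MapsTo F (Set.Ioi 1) (Set.Ioi 0) := by
    intro t ht
    rw [mem_Ioi, hF]
    exact div_pos one_pos (glt_pos ht)
  have hsurj : Set.SurjOn F (Set.Ioi 1) (Set.Ioi 0) := by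
    intro c hc
    have hc0 : 0 < c := hc
    set M : ℝ := max (Real.exp 1) (1 / c) with hM
    have h2e : (2:ℝ) ≤ Real.exp 1 := by have := Real.add_one_le_exp (1:ℝ); linarith
    have hM1 : (1:ℝ) ≤ M := le_trans (by linarith) (le_max_left _ _)
    have hlM : 1 ≤ Real.log M := by
      rw [← Real.log_exp 1]
      exact Real.log_le_log (Real.exp_pos 1) (le_max_left _ _)
    have hgM : 1 / c ≤ M * Real.log M := by
      have hMc : 1 / c ≤ M := le_max_right _ _
      nlinarith
    have hcont : ContinuousOn (fun t : ℝ => t * Real.log t) (Icc 1 M) :=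
      continuousOn_id.mul (Real.continuousOn_log.mono (fun t ht => by
        simp only [mem_compl_iff, mem_singleton_iff]
        exact ne_of_gt (lt_of_lt_of_le one_pos ht.1)))
    have hIcc : 1 / c ∈ Icc ((fun t : ℝ => t * Real.log t) 1) ((fun t : ℝ => t * Real.log t) M) := by
      constructor
      · simp [Real.log_one]
        positivity
      · simpa using hgM
    obtain ⟨t, htmem, htval⟩ := intermediate_value_Icc hM1 hcont hIcc
    simp only at htval
    have ht1 : 1 < t := by
      rcases eq_or_lt_of_le htmem.1 with h | h
      · exfalso
        have h0 : t * Real.log t = 0 := by rw [← h]; simp [Real.log_one]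
        rw [h0] at htval
        have hpos : 0 < 1 / c := by positivity
        rw [← htval] at hpos
        exact lt_irrefl 0 hpos
      · exact h
    exact ⟨t, ht1, by rw [hF t, htval, one_div_one_div]⟩
  have hbij : Set.BijOn F (Set.Ioi 1) (Set.Ioi 0) := ⟨hmapsF, hanti.injOn, hsurj⟩
  refine ⟨hanti, hcd, hbij, ?_⟩
  intro Finv hmapsI hinv b₂ hb0 hb
  have hFd' : ∀ t ∈ Set.Ioi (1:ℝ), HasDerivAt F (Fd t) t := by
    intro t ht; rw [hFeq]; exact hasDerivAt_Ffun ht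
  have hderivF : ∀ t ∈ Set.Ioi (1:ℝ), deriv F t = Fd t := fun t ht => (hFd' t ht).deriv
  have hlinv : ∀ u ∈ Set.Ioi (1:ℝ), Finv (F u) = u := fun u hu => hinv.1 hu
  have hrinv : ∀ s ∈ Set.Ioi (0:ℝ), F (Finv s) = s := fun s hs => hinv.2 hs
  have hFinvanti : StrictAntiOn Finv (Set.Ioi 0) := by
    intro s hs s' hs' hss
    by_contra hle
    push_neg at hle
    rcases eq_or_lt_of_le hle with h | h
    · have h2 := congrArg F h
      rw [hrinv s hs, hrinv s' hs'] at h2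
      exact absurd h2 (ne_of_lt hss)
    · have h2 := hanti (hmapsI hs) (hmapsI hs') h
      rw [hrinv s hs, hrinv s' hs'] at h2
      exact absurd hss (not_lt.mpr h2.le)
  have hFinvcont : ∀ s ∈ Set.Ioi (0:ℝ), ContinuousAt Finv s := by
    intro s hs
    have hmono : StrictMonoOn (fun x => -Finv x) (Set.Ioi 0) := fun a ha b hb' hab =>
      neg_lt_neg (hFinvanti ha hb' hab)
    have himg : (fun x => -Finv x) '' (Set.Ioi 0) ∈ 𝓝 (-Finv s) := by
      have hsub : Set.Iio (-1:ℝ) ⊆ (fun x => -Finv x) '' (Set.Ioi 0) := by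
        intro v hv
        have hv1 : (1:ℝ) < -v := by
          have : v < -1 := hv
          linarith
        refine ⟨F (-v), hmapsF hv1, ?_⟩
        show -Finv (F (-v)) = v
        rw [hlinv _ hv1]
        ring
      exact Filter.mem_of_superset (Iio_mem_nhds (by
        have : 1 < Finv s := hmapsI hs
        linarith)) hsub
    have hcont := hmono.continuousAt_of_image_mem_nhds (Ioi_mem_nhds hs) himg
    have h2 : ContinuousAt (fun x => -(-Finv x)) s := hcont.neg
    simpa using h2
  have hFinvderiv : ∀ s ∈ Set.Ioi (0:ℝ), HasDerivAt Finv (Fd (Finv s))⁻¹ s := by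
    intro s hs
    apply HasDerivAt.of_local_left_inverse (hFinvcont s hs) (hFd' _ (hmapsI hs))
      (Fd_neg (hmapsI hs)).ne
    filter_upwards [Ioi_mem_nhds hs] with y hy
    exact hrinv y hy
  have hutop : Filter.Tendsto (fun y : ℝ => Finv |y|) (𝓝[≠] (0:ℝ)) Filter.atTop := by
    rw [Filter.tendsto_atTop]
    intro M
    set M' : ℝ := max M 2 with hM'
    have hM'1 : (1:ℝ) < M' := lt_of_lt_of_le one_lt_two (le_max_right _ _)
    have hFM' : 0 < F M' := hmapsF hM'1
    have h1 : ∀ᶠ y in 𝓝 (0:ℝ), |y| < F M' := by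
      have := eventually_abs_sub_lt (0:ℝ) hFM'
      simpa using this
    filter_upwards [h1.filter_mono nhdsWithin_le_nhds, self_mem_nhdsWithin] with y hylt hyne
    have hyne' : y ≠ 0 := hyne
    have hy0 : 0 < |y| := abs_pos.mpr hyne'
    have h2 := hFinvanti (mem_Ioi.mpr hy0) (mem_Ioi.mpr hFM') hylt
    rw [hlinv M' hM'1] at h2
    exact le_trans (le_max_left M 2) (le_of_lt h2)
  have hb20 : HasDerivAt b₂ 0 0 := by
    rw [hasDerivAt_iff_tendsto_slope]
    apply Filter.Tendsto.congr' _ (tendsto_aux1.comp hutop)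
    filter_upwards [self_mem_nhdsWithin] with y hy
    have hyne : y ≠ 0 := hy
    have hy0 : 0 < |y| := abs_pos.mpr hyne
    simp only [Function.comp]
    set u := Finv |y| with hu
    have hu1 : 1 < u := hmapsI hy0
    have hyval : |y| = 1 / (u * Real.log u) := by
      conv_lhs => rw [← hrinv |y| hy0]
      rw [hF]
    have hderivFu : deriv F u = Fd u := hderivF u hu1
    have hgu : u * Real.log u ≠ 0 := (glt_pos hu1).ne'
    have hslope : slope b₂ 0 y = Real.sign y * Fd u / y := by
      rw [slope_def_field, hb0, sub_zero, sub_zero, hb y hyne, hderivFu]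
    rw [hslope]
    clear_value u
    rcases hyne.lt_or_gt with hylt | hygt
    · have hy' : y = -(1 / (u * Real.log u)) := by
        rw [← hyval, abs_of_neg hylt]; ring
      rw [Real.sign_of_neg hylt, hy']
      unfold Fd
      field_simp
    · have hy' : y = 1 / (u * Real.log u) := by rw [← hyval, abs_of_pos hygt]
      rw [Real.sign_of_pos hygt, hy']
      unfold Fd
      field_simp
  have hb2y : ∀ y : ℝ, y ≠ 0 → HasDerivAt b₂ (Fdd (Finv |y|) / Fd (Finv |y|)) y := by
    intro y hyne
    rcases hyne.lt_or_gt with hylt | hygt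
    · rw [abs_of_neg hylt]
      have hy0 : 0 < -y := neg_pos.mpr hylt
      have hu1 : 1 < Finv (-y) := hmapsI hy0
      have h1 : HasDerivAt Finv (Fd (Finv (-y)))⁻¹ (-y) := hFinvderiv _ hy0
      have h2 : HasDerivAt (fun s : ℝ => Finv (-s)) ((Fd (Finv (-y)))⁻¹ * (-1)) y :=
        h1.comp y (hasDerivAt_neg y)
      have h3 : HasDerivAt (deriv F) (Fdd (Finv (-y))) (Finv (-y)) := by
        apply (hasDerivAt_Fd hu1).congr_of_eventuallyEq
        filter_upwards [Ioi_mem_nhds hu1] with t ht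
        exact hderivF t ht
      have h4 := (h3.comp y h2).neg
      have h5 : HasDerivAt (fun s : ℝ => -(deriv F (Finv (-s))))
          (Fdd (Finv (-y)) / Fd (Finv (-y))) y := by
        refine h4.congr_deriv ?_
        rw [div_eq_mul_inv]; ring
      apply h5.congr_of_eventuallyEq
      filter_upwards [Iio_mem_nhds hylt] with s hs
      have hs0 : s < 0 := hs
      rw [hb s (ne_of_lt hs0), Real.sign_of_neg hs0, abs_of_neg hs0]
      ring
    · rw [abs_of_pos hygt]
      have hu1 : 1 < Finv y := hmapsI hygt
      have h1 : HasDerivAt Finv (Fd (Finv y))⁻¹ y := hFinvderiv _ hygt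
      have h3 : HasDerivAt (deriv F) (Fdd (Finv y)) (Finv y) := by
        apply (hasDerivAt_Fd hu1).congr_of_eventuallyEq
        filter_upwards [Ioi_mem_nhds hu1] with t ht
        exact hderivF t ht
      have h4 := h3.comp y h1
      have h5 : HasDerivAt (fun s : ℝ => deriv F (Finv s)) (Fdd (Finv y) / Fd (Finv y)) y := by
        refine h4.congr_deriv ?_
        rw [div_eq_mul_inv]
      apply h5.congr_of_eventuallyEq
      filter_upwards [Ioi_mem_nhds hygt] with s hs
      have hs0 : 0 < s := hs
      rw [hb s (ne_of_gt hs0), Real.sign_of_pos hs0, abs_of_pos hs0, one_mul]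
  have hDiff : Differentiable ℝ b₂ := by
    intro y
    by_cases hy : y = 0
    · subst hy; exact hb20.differentiableAt
    · exact (hb2y y hy).differentiableAt
  have hderivb : deriv b₂ = fun y => if y = 0 then 0 else Fdd (Finv |y|) / Fd (Finv |y|) := by
    funext y
    by_cases hy : y = 0
    · subst hy; simp [hb20.deriv]
    · simp only [hy, if_false]
      exact (hb2y y hy).deriv
  have hcontD : Continuous (deriv b₂) := by
    rw [hderivb, continuous_iff_continuousAt]
    intro y
    by_cases hy : y = 0
    · subst hy
      have h0 : (fun y : ℝ => if y = 0 then (0:ℝ) else Fdd (Finv |y|) / Fd (Finv |y|)) 0 = 0 :=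
        if_pos rfl
      have part1 : Filter.Tendsto
          (fun y : ℝ => if y = 0 then (0:ℝ) else Fdd (Finv |y|) / Fd (Finv |y|))
          (𝓝[≠] (0:ℝ)) (𝓝 0) := by
        apply Filter.Tendsto.congr' _ (tendsto_aux2.comp hutop)
        filter_upwards [self_mem_nhdsWithin] with z hz
        have hzne : z ≠ 0 := hz
        simp [Function.comp, hzne]
      have part2 : Filter.Tendsto
          (fun y : ℝ => if y = 0 then (0:ℝ) else Fdd (Finv |y|) / Fd (Finv |y|))
          (pure (0:ℝ)) (𝓝 0) := by
        have h2 := tendsto_pure_nhds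
          (fun y : ℝ => if y = 0 then (0:ℝ) else Fdd (Finv |y|) / Fd (Finv |y|)) 0
        simpa using h2
      have key := part1.sup part2
      rw [nhdsNE_sup_pure] at key
      unfold ContinuousAt
      rw [h0]
      exact key
    · have hy0 : 0 < |y| := abs_pos.mpr hy
      have hu1 : 1 < Finv |y| := hmapsI hy0
      have hcabs : ContinuousAt (fun s : ℝ => Finv |s|) y :=
        (hFinvcont _ hy0).comp continuous_abs.continuousAt
      have hcF' : ContinuousAt (fun s : ℝ => Fd (Finv |s|)) y :=
        ContinuousAt.comp (g := Fd) (x := y) (hasDerivAt_Fd hu1).continuousAt hcabs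
      have hcF'' : ContinuousAt (fun s : ℝ => Fdd (Finv |s|)) y :=
        ContinuousAt.comp (g := Fdd) (x := y) (continuousAt_Fdd hu1) hcabs
      have hcq : ContinuousAt (fun s : ℝ => Fdd (Finv |s|) / Fd (Finv |s|)) y :=
        hcF''.div hcF' (Fd_neg hu1).ne
      apply hcq.congr
      filter_upwards [compl_singleton_mem_nhds hy] with s hs
      have hsne : s ≠ 0 := hs
      simp [hsne]
  exact ⟨contDiff_one_iff_deriv.mpr ⟨hDiff, hcontD⟩, hb20.deriv⟩
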